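/- arXiv:2305.15349 — 3 statements merged into one kernel-verified Lean document; each statement's English description precedes it below -/
import Mathlib

section
/- Let ℓ : ℝ^d → ℝ be twice continuously differentiable and L_ℓ-smooth, and use the linear parameterization ϕ(x) = x (with s restricted to positive entries). Then the energy f(λ) = E[ℓ(T_λ(u))] is L_ℓ-smooth on the parameter space Λ with respect to the parameter norm. -/
open MeasureTheory ProbabilityTheory InnerProductSpace RealInnerProductSpace

noncomputable section

abbrev Euc (d : ℕ) := EuclideanSpace ℝ (Fin d)

/-- Indices of the strictly lower-triangular entries of a `d × d` matrix. -/
abbrev LowIdx (d : ℕ) := {p : Fin d × Fin d // p.2 < p.1}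

/-- Index set for the parameters `λ = (m, s, L)` of the full-rank Cholesky family. -/
abbrev ParamIdx (d : ℕ) := (Fin d) ⊕ ((Fin d) ⊕ (LowIdx d))

/-- The parameter space `Λ`, with `‖λ‖² = ‖m‖₂² + ‖s‖₂² + ‖L‖_F²`. -/
abbrev Param (d : ℕ) := EuclideanSpace ℝ (ParamIdx d)

def mOf {d : ℕ} (lam : Param d) (i : Fin d) : ℝ := lam (Sum.inl i)
def sOf {d : ℕ} (lam : Param d) (i : Fin d) : ℝ := lam (Sum.inr (Sum.inl i))
def LOf {d : ℕ} (lam : Param d) (i j : Fin d) : ℝ :=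
  if h : j < i then lam (Sum.inr (Sum.inr ⟨(i, j), h⟩)) else 0

/-- The location-scale reparameterization `T_λ(u) = (diag(ϕ(s)) + L) u + m`. -/
def Tmap {d : ℕ} (ϕ : ℝ → ℝ) (lam : Param d) (u : Fin d → ℝ) : Euc d :=
  WithLp.toLp 2 (fun i => mOf lam i + ϕ (sOf lam i) * u i + ∑ j, LOf lam i j * u j)

lemma mOf_add {d} (a b : Param d) (i) : mOf (a+b) i = mOf a i + mOf b i := rfl
lemma sOf_add {d} (a b : Param d) (i) : sOf (a+b) i = sOf a i + sOf b i := rfl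
lemma LOf_add {d} (a b : Param d) (i j) : LOf (a+b) i j = LOf a i j + LOf b i j := by
  unfold LOf; split <;> simp [PiLp.add_apply]

def Blin {d : ℕ} (w : Fin d → ℝ) : Param d →L[ℝ] Euc d :=
  LinearMap.toContinuousLinearMap
  { toFun := fun lam => (WithLp.toLp 2 (fun i => mOf lam i + sOf lam i * w i + ∑ j, LOf lam i j * w j) : Euc d)
    map_add' := by
      intro a b
      ext i
      simp only [PiLp.toLp_apply, PiLp.add_apply, mOf_add, sOf_add, LOf_add, add_mul, Finset.sum_add_distrib]
      ring
    map_smul' := by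
      intro c a
      ext i
      have hm : mOf (c • a) i = c * mOf a i := rfl
      have hs : sOf (c • a) i = c * sOf a i := rfl
      have hL : ∀ j, LOf (c • a) i j = c * LOf a i j := by
        intro j; unfold LOf; split <;> simp [PiLp.smul_apply, smul_eq_mul]
      simp only [PiLp.toLp_apply, PiLp.smul_apply, smul_eq_mul, hm, hs, hL, Finset.mul_sum, RingHom.id_apply,
        mul_assoc, mul_add, ← Finset.mul_sum] }

lemma Blin_apply {d : ℕ} (w : Fin d → ℝ) (lam : Param d) :
    Blin w lam = Tmap (fun x => x) lam w := rfl

lemma grad_comp {d : ℕ} (w : Fin d → ℝ) (ℓ : Euc d → ℝ) (hC2 : ContDiff ℝ 2 ℓ) (lam : Param d) :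
    gradient (fun l => ℓ (Tmap (fun x => x) l w)) lam
      = ContinuousLinearMap.adjoint (Blin w) (gradient ℓ (Blin w lam)) := by
  have hdiff : DifferentiableAt ℝ ℓ (Blin w lam) :=
    (hC2.differentiable two_ne_zero).differentiableAt
  have h1 : HasGradientAt ℓ (gradient ℓ (Blin w lam)) (Blin w lam) := hdiff.hasGradientAt
  have h2 := h1.hasFDerivAt
  have h3 : HasFDerivAt (fun l => ℓ (Blin w l))
      ((toDual ℝ (Euc d) (gradient ℓ (Blin w lam))).comp (Blin w)) lam :=
    h2.comp lam (Blin w).hasFDerivAt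
  have h4 : (toDual ℝ (Euc d) (gradient ℓ (Blin w lam))).comp (Blin w)
      = toDual ℝ (Param d) (ContinuousLinearMap.adjoint (Blin w) (gradient ℓ (Blin w lam))) := by
    ext v
    simp [ContinuousLinearMap.adjoint_inner_left, toDual_apply_apply, real_inner_comm]
  rw [h4] at h3
  have h5 : HasGradientAt (fun l => ℓ (Tmap (fun x => x) l w))
      (ContinuousLinearMap.adjoint (Blin w) (gradient ℓ (Blin w lam))) lam := by
    have : (fun l => ℓ (Tmap (fun x => x) l w)) = fun l => ℓ (Blin w l) := by
      funext l; rw [Blin_apply]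
    rw [this]
    simpa using h3.hasGradientAt
  exact h5.gradient

section Moments
variable {d : ℕ} {Ω : Type*} [MeasurableSpace Ω] {μP : Measure Ω} [IsProbabilityMeasure μP]
variable {u : Ω → Fin d → ℝ}

lemma integrable_u (hintpow : ∀ i : Fin d, ∀ k ≤ 4, Integrable (fun ω => (u ω i) ^ k) μP)
    (i : Fin d) : Integrable (fun ω => u ω i) μP := by
  simpa using hintpow i 1 (by norm_num)

lemma integrable_mul_u (hmeas : ∀ i, Measurable fun ω => u ω i)
    (hintpow : ∀ i : Fin d, ∀ k ≤ 4, Integrable (fun ω => (u ω i) ^ k) μP)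
    (j k : Fin d) : Integrable (fun ω => u ω j * u ω k) μP := by
  have h2j := hintpow j 2 (by norm_num)
  have h2k := hintpow k 2 (by norm_num)
  have hb : Integrable (fun ω => ((u ω j)^2 + (u ω k)^2)/2) μP := (h2j.add h2k).div_const 2
  refine hb.mono' (((hmeas j).mul (hmeas k)).aestronglyMeasurable) ?_
  filter_upwards with ω
  have h1 := sq_nonneg (u ω j - u ω k); have h2 := sq_nonneg (u ω j + u ω k)
  rw [Real.norm_eq_abs, abs_le]
  constructor <;> nlinarith

lemma integral_mul_u (hmeas : ∀ i, Measurable fun ω => u ω i)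
    (hindep : iIndepFun (fun i ω => u ω i) μP)
    (hmean : ∀ i, ∫ ω, u ω i ∂μP = 0)
    (hvar : ∀ i, ∫ ω, (u ω i) ^ 2 ∂μP = 1)
    (hintpow : ∀ i : Fin d, ∀ k ≤ 4, Integrable (fun ω => (u ω i) ^ k) μP)
    (j k : Fin d) :
    ∫ ω, u ω j * u ω k ∂μP = if j = k then 1 else 0 := by
  by_cases h : j = k
  · subst h; rw [if_pos rfl]; simpa [pow_two] using hvar j
  · rw [if_neg h]
    have hid : IndepFun (fun ω => u ω j) (fun ω => u ω k) μP := hindep.indepFun h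
    have := hid.integral_mul_eq_mul_integral (integrable_u hintpow j).aestronglyMeasurable (integrable_u hintpow k).aestronglyMeasurable
    simpa [Pi.mul_apply, hmean j, hmean k] using this

lemma integrable_affine_sq (hmeas : ∀ i, Measurable fun ω => u ω i)
    (hintpow : ∀ i : Fin d, ∀ k ≤ 4, Integrable (fun ω => (u ω i) ^ k) μP)
    (a : ℝ) (c : Fin d → ℝ) :
    Integrable (fun ω => (a + ∑ j, c j * u ω j)^2) μP := by
  have hexp : ∀ ω, (a + ∑ j, c j * u ω j)^2
      = a^2 + (2*a) * (∑ j, c j * u ω j)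
        + ∑ j, ∑ k, (c j * c k) * (u ω j * u ω k) := by
    intro ω
    have hsq : (∑ j, c j * u ω j)^2 = ∑ j, ∑ k, (c j * c k) * (u ω j * u ω k) := by
      rw [sq, Finset.sum_mul_sum]
      exact Finset.sum_congr rfl fun j _ => Finset.sum_congr rfl fun k _ => by ring
    rw [add_sq, hsq]
  simp_rw [hexp]
  refine ((integrable_const _).add ?_).add ?_
  · exact (integrable_finset_sum _ fun j _ => (integrable_u hintpow j).const_mul (c j)).const_mul _
  · exact integrable_finset_sum _ fun j _ => integrable_finset_sum _ fun k _ =>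
      (integrable_mul_u hmeas hintpow j k).const_mul _

lemma integral_affine_sq (hmeas : ∀ i, Measurable fun ω => u ω i)
    (hindep : iIndepFun (fun i ω => u ω i) μP)
    (hmean : ∀ i, ∫ ω, u ω i ∂μP = 0)
    (hvar : ∀ i, ∫ ω, (u ω i) ^ 2 ∂μP = 1)
    (hintpow : ∀ i : Fin d, ∀ k ≤ 4, Integrable (fun ω => (u ω i) ^ k) μP)
    (a : ℝ) (c : Fin d → ℝ) :
    ∫ ω, (a + ∑ j, c j * u ω j)^2 ∂μP = a^2 + ∑ j, (c j)^2 := by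
  have hexp : ∀ ω, (a + ∑ j, c j * u ω j)^2
      = a^2 + (2*a) * (∑ j, c j * u ω j)
        + ∑ j, ∑ k, (c j * c k) * (u ω j * u ω k) := by
    intro ω
    have hsq : (∑ j, c j * u ω j)^2 = ∑ j, ∑ k, (c j * c k) * (u ω j * u ω k) := by
      rw [sq, Finset.sum_mul_sum]
      exact Finset.sum_congr rfl fun j _ => Finset.sum_congr rfl fun k _ => by ring
    rw [add_sq, hsq]
  have hI1 : Integrable (fun ω => (2*a) * (∑ j, c j * u ω j)) μP :=
    (integrable_finset_sum _ fun j _ => (integrable_u hintpow j).const_mul (c j)).const_mul _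
  have hI2 : Integrable (fun ω => ∑ j, ∑ k, (c j * c k) * (u ω j * u ω k)) μP :=
    integrable_finset_sum _ fun j _ => integrable_finset_sum _ fun k _ =>
      (integrable_mul_u hmeas hintpow j k).const_mul _
  simp_rw [hexp]
  have hI0 : Integrable (fun ω => a^2 + (2*a) * (∑ j, c j * u ω j)) μP :=
    (integrable_const (a^2)).add hI1
  rw [integral_add hI0 hI2, integral_add (integrable_const (a^2)) hI1, integral_const]
  have e1 : ∫ ω, (2*a) * (∑ j, c j * u ω j) ∂μP = 0 := by
    rw [integral_const_mul, integral_finset_sum _ fun j _ => (integrable_u hintpow j).const_mul (c j)]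
    simp [integral_const_mul, hmean]
  have e2 : ∫ ω, ∑ j, ∑ k, (c j * c k) * (u ω j * u ω k) ∂μP = ∑ j, (c j)^2 := by
    rw [integral_finset_sum _ fun j _ => integrable_finset_sum _ fun k _ =>
      (integrable_mul_u hmeas hintpow j k).const_mul _]
    have : ∀ j : Fin d, ∫ ω, ∑ k, (c j * c k) * (u ω j * u ω k) ∂μP = (c j)^2 := by
      intro j
      rw [integral_finset_sum _ fun k _ => (integrable_mul_u hmeas hintpow j k).const_mul _]
      have : ∀ k : Fin d, ∫ ω, (c j * c k) * (u ω j * u ω k) ∂μP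
          = if j = k then (c j)^2 else 0 := by
        intro k
        rw [integral_const_mul, integral_mul_u hmeas hindep hmean hvar hintpow j k]
        by_cases h : j = k
        · subst h; simp [sq]
        · simp [h]
      simp [this]
    simp [this]
  rw [e1, e2]
  simp
end Moments

lemma euc_norm_sq {ι : Type*} [Fintype ι] (x : EuclideanSpace ℝ ι) :
    ‖x‖^2 = ∑ i, (x i)^2 := by
  rw [EuclideanSpace.norm_eq, Real.sq_sqrt (Finset.sum_nonneg fun i _ => sq_nonneg _)]
  simp [sq_abs]

lemma Blin_apply_coord {d : ℕ} (w : Fin d → ℝ) (v : Param d) (i : Fin d) :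
    (Blin w v) i = mOf v i + ∑ j, (LOf v i j + if i = j then sOf v i else 0) * w j := by
  have : (Blin w v) i = mOf v i + sOf v i * w i + ∑ j, LOf v i j * w j := rfl
  rw [this]
  simp [add_mul, Finset.sum_add_distrib, ite_mul, Finset.sum_ite_eq]
  ring

lemma coef_sq {d : ℕ} (v : Param d) (i j : Fin d) :
    (LOf v i j + if i = j then sOf v i else 0)^2
      = (LOf v i j)^2 + (if i = j then (sOf v i)^2 else 0) := by
  by_cases h : i = j
  · subst h
    have : LOf v i i = 0 := dif_neg (lt_irrefl i)
    simp [this]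
  · simp [h]

lemma sum_LOf_sq {d : ℕ} (v : Param d) :
    ∑ i, ∑ j, (LOf v i j)^2 = ∑ p : LowIdx d, (v (Sum.inr (Sum.inr p)))^2 := by
  classical
  set g : Fin d × Fin d → ℝ :=
    fun q => if h : q.2 < q.1 then (v (Sum.inr (Sum.inr ⟨q, h⟩)))^2 else 0 with hg
  have h1 : ∑ i, ∑ j, (LOf v i j)^2 = ∑ q : Fin d × Fin d, g q := by
    rw [Fintype.sum_prod_type]
    refine Finset.sum_congr rfl fun i _ => Finset.sum_congr rfl fun j _ => ?_
    unfold LOf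
    by_cases h : j < i
    · simp [hg, h]
    · simp [hg, h]
  rw [h1, ← Finset.sum_filter_add_sum_filter_not Finset.univ (fun q => q.2 < q.1) g]
  have h0 : ∑ q ∈ Finset.univ.filter (fun q : Fin d × Fin d => ¬ q.2 < q.1), g q = 0 := by
    refine Finset.sum_eq_zero fun q hq => ?_
    have := (Finset.mem_filter.mp hq).2
    simp [hg, this]
  rw [h0, add_zero]
  rw [Finset.sum_subtype (p := fun q : Fin d × Fin d => q.2 < q.1) _ (by simp) g]
  refine Finset.sum_congr rfl fun p _ => ?_
  simp [hg, p.2]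

lemma param_norm_sq {d : ℕ} (v : Param d) :
    ‖v‖^2 = ∑ i, (mOf v i)^2 + ∑ i, (sOf v i)^2 + ∑ i, ∑ j, (LOf v i j)^2 := by
  rw [euc_norm_sq, sum_LOf_sq]
  rw [Fintype.sum_sum_type, Fintype.sum_sum_type]
  simp [mOf, sOf, add_assoc]

lemma L2_identity {d : ℕ} {Ω : Type*} [MeasurableSpace Ω] {μP : Measure Ω}
    [IsProbabilityMeasure μP] {u : Ω → Fin d → ℝ}
    (hmeas : ∀ i, Measurable fun ω => u ω i)
    (hindep : iIndepFun (fun i ω => u ω i) μP)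
    (hmean : ∀ i, ∫ ω, u ω i ∂μP = 0)
    (hvar : ∀ i, ∫ ω, (u ω i) ^ 2 ∂μP = 1)
    (hintpow : ∀ i : Fin d, ∀ k ≤ 4, Integrable (fun ω => (u ω i) ^ k) μP)
    (v : Param d) :
    ∫ ω, ‖Blin (u ω) v‖^2 ∂μP = ‖v‖^2 := by
  have hpt : ∀ ω, ‖Blin (u ω) v‖^2
      = ∑ i, (mOf v i + ∑ j, (LOf v i j + if i = j then sOf v i else 0) * u ω j)^2 := by
    intro ω
    rw [euc_norm_sq]
    exact Finset.sum_congr rfl fun i _ => by rw [Blin_apply_coord]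
  simp_rw [hpt]
  rw [integral_finset_sum _ fun i _ => integrable_affine_sq hmeas hintpow _ _]
  have : ∀ i : Fin d,
      ∫ ω, (mOf v i + ∑ j, (LOf v i j + if i = j then sOf v i else 0) * u ω j)^2 ∂μP
      = (mOf v i)^2 + ((sOf v i)^2 + ∑ j, (LOf v i j)^2) := by
    intro i
    rw [integral_affine_sq hmeas hindep hmean hvar hintpow]
    congr 1
    simp_rw [coef_sq]
    rw [Finset.sum_add_distrib]
    simp [Finset.sum_ite_eq]
    ring
  simp_rw [this]
  rw [param_norm_sq]
  rw [Finset.sum_add_distrib, Finset.sum_add_distrib]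
  ring

lemma integrable_Bw_sq {d : ℕ} {Ω : Type*} [MeasurableSpace Ω] {μP : Measure Ω}
    [IsProbabilityMeasure μP] {u : Ω → Fin d → ℝ}
    (hmeas : ∀ i, Measurable fun ω => u ω i)
    (hintpow : ∀ i : Fin d, ∀ k ≤ 4, Integrable (fun ω => (u ω i) ^ k) μP)
    (v : Param d) :
    Integrable (fun ω => ‖Blin (u ω) v‖^2) μP := by
  have hpt : ∀ ω, ‖Blin (u ω) v‖^2
      = ∑ i, (mOf v i + ∑ j, (LOf v i j + if i = j then sOf v i else 0) * u ω j)^2 := by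
    intro ω
    rw [euc_norm_sq]
    exact Finset.sum_congr rfl fun i _ => by rw [Blin_apply_coord]
  simp_rw [hpt]
  exact integrable_finset_sum _ fun i _ => integrable_affine_sq hmeas hintpow _ _


/-- Let `ℓ` be twice continuously differentiable and `L_ℓ`-smooth,
and use the linear parameterization `ϕ(x) = x` (with `s` restricted to positive
entries).  Then the energy `f(λ) = E[ℓ(T_λ(u))]` is `L_ℓ`-smooth on `Λ` with respect
to the parameter norm: its gradient is `L_ℓ`-Lipschitz on `Λ = {λ | s > 0}`.
(Differentiation under the expectation is encoded by `hswap`.) -/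
theorem energy_smooth_linear
    {d : ℕ} {Ω : Type*} [MeasurableSpace Ω] (μP : Measure Ω) [IsProbabilityMeasure μP]
    (u : Ω → Fin d → ℝ)
    (hmeas : ∀ i, Measurable fun ω => u ω i)
    (hindep : iIndepFun (fun i ω => u ω i) μP)
    (hident : ∀ i j, IdentDistrib (fun ω => u ω i) (fun ω => u ω j) μP μP)
    (hmean : ∀ i, ∫ ω, u ω i ∂μP = 0)
    (hvar : ∀ i, ∫ ω, (u ω i) ^ 2 ∂μP = 1)
    (hmom3 : ∀ i, ∫ ω, (u ω i) ^ 3 ∂μP = 0)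
    (kφ : ℝ) (hmom4 : ∀ i, ∫ ω, (u ω i) ^ 4 ∂μP = kφ)
    (hintpow : ∀ (i : Fin d), ∀ k ≤ 4, Integrable (fun ω => (u ω i) ^ k) μP)
    (ℓ : Euc d → ℝ) (Lℓ : ℝ)
    (hC2 : ContDiff ℝ 2 ℓ)
    (hsmooth : ∀ z z', ‖gradient ℓ z - gradient ℓ z'‖ ≤ Lℓ * ‖z - z'‖)
    (fE : Param d → ℝ)
    (hfE : ∀ lam, fE lam = ∫ ω, ℓ (Tmap (fun x => x) lam (u ω)) ∂μP)
    (hgint : ∀ lam : Param d,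
      Integrable (fun ω => gradient (fun l => ℓ (Tmap (fun x => x) l (u ω))) lam) μP)
    (hswap : ∀ lam : Param d,
      HasGradientAt fE
        (∫ ω, gradient (fun l => ℓ (Tmap (fun x => x) l (u ω))) lam ∂μP) lam) :
    ∀ lam lam' : Param d, (∀ i, 0 < sOf lam i) → (∀ i, 0 < sOf lam' i) →
      ‖gradient fE lam - gradient fE lam'‖ ≤ Lℓ * ‖lam - lam'‖ := by
  intro lam lam' _ _
  by_cases hd : d = 0
  · subst hd
    have hll : lam = lam' := PiLp.ext fun p => isEmptyElim p
    simp [hll]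
  -- Lℓ is nonnegative
  have hL : 0 ≤ Lℓ := by
    have i0 : Fin d := ⟨0, Nat.pos_of_ne_zero hd⟩
    have h := hsmooth (EuclideanSpace.single i0 (1:ℝ)) 0
    have hn : ‖(EuclideanSpace.single i0 (1:ℝ)) - 0‖ = 1 := by
      rw [sub_zero, EuclideanSpace.norm_single]; norm_num
    rw [hn, mul_one] at h
    exact le_trans (norm_nonneg _) h
  -- abbreviations
  set G : Param d → Ω → Param d :=
    fun l ω => ContinuousLinearMap.adjoint (Blin (u ω)) (gradient ℓ (Blin (u ω) l)) with hG
  have hGint : ∀ l, Integrable (G l) μP := by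
    intro l
    exact (hgint l).congr (Filter.Eventually.of_forall fun ω => grad_comp (u ω) ℓ hC2 l)
  have hgrad : ∀ l : Param d, gradient fE l = ∫ ω, G l ω ∂μP := by
    intro l
    rw [(hswap l).gradient]
    exact integral_congr_ae (Filter.Eventually.of_forall fun ω => grad_comp (u ω) ℓ hC2 l)
  set D := gradient fE lam - gradient fE lam' with hD
  set δ := lam - lam' with hδ
  -- key inequality
  have key : ∀ v : Param d, ∀ t : ℝ, 0 < t →
      ⟪v, D⟫ ≤ Lℓ/2 * (t * ‖δ‖^2 + ‖v‖^2 / t) := by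
    intro v t ht
    have hsub : Integrable (fun ω => G lam ω - G lam' ω) μP := (hGint lam).sub (hGint lam')
    have h1 : ⟪v, D⟫ = ∫ ω, ⟪v, G lam ω - G lam' ω⟫ ∂μP := by
      rw [hD, hgrad lam, hgrad lam', ← integral_sub (hGint lam) (hGint lam')]
      exact (integral_inner hsub v).symm
    have hpt : ∀ ω, ⟪v, G lam ω - G lam' ω⟫
        ≤ Lℓ/2 * (t * ‖Blin (u ω) δ‖^2 + ‖Blin (u ω) v‖^2 / t) := by
      intro ω
      set B := Blin (u ω)
      have e1 : G lam ω - G lam' ω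
          = ContinuousLinearMap.adjoint B (gradient ℓ (B lam) - gradient ℓ (B lam')) := by
        rw [hG]; simp [map_sub, B]
      have e2 : ⟪v, G lam ω - G lam' ω⟫
          = ⟪gradient ℓ (B lam) - gradient ℓ (B lam'), B v⟫ := by
        rw [e1, real_inner_comm, ContinuousLinearMap.adjoint_inner_left]
      rw [e2]
      have h3 : ⟪gradient ℓ (B lam) - gradient ℓ (B lam'), B v⟫
          ≤ ‖gradient ℓ (B lam) - gradient ℓ (B lam')‖ * ‖B v‖ :=
        real_inner_le_norm _ _
      have h4 : ‖gradient ℓ (B lam) - gradient ℓ (B lam')‖ ≤ Lℓ * ‖B δ‖ := by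
        have := hsmooth (B lam) (B lam')
        rwa [← map_sub, ← hδ] at this
      have h5 : ⟪gradient ℓ (B lam) - gradient ℓ (B lam'), B v⟫ ≤ Lℓ * (‖B δ‖ * ‖B v‖) := by
        calc _ ≤ ‖gradient ℓ (B lam) - gradient ℓ (B lam')‖ * ‖B v‖ := h3
        _ ≤ (Lℓ * ‖B δ‖) * ‖B v‖ := by
            exact mul_le_mul_of_nonneg_right h4 (norm_nonneg _)
        _ = Lℓ * (‖B δ‖ * ‖B v‖) := by ring
      refine h5.trans ?_
      have hamgm : ‖B δ‖ * ‖B v‖ ≤ (t * ‖B δ‖^2 + ‖B v‖^2 / t) / 2 := by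
        have e : ‖B v‖^2 / t * t = ‖B v‖^2 := div_mul_cancel₀ _ (ne_of_gt ht)
        nlinarith [sq_nonneg (t * ‖B δ‖ - ‖B v‖), ht, e]
      calc Lℓ * (‖B δ‖ * ‖B v‖) ≤ Lℓ * ((t * ‖B δ‖^2 + ‖B v‖^2 / t) / 2) :=
          mul_le_mul_of_nonneg_left hamgm hL
      _ = Lℓ/2 * (t * ‖B δ‖^2 + ‖B v‖^2 / t) := by ring
    have hIl : Integrable (fun ω => ⟪v, G lam ω - G lam' ω⟫) μP := hsub.const_inner v
    have hIr : Integrable (fun ω => Lℓ/2 * (t * ‖Blin (u ω) δ‖^2 + ‖Blin (u ω) v‖^2 / t)) μP := by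
      exact (((integrable_Bw_sq hmeas hintpow δ).const_mul t).add
        ((integrable_Bw_sq hmeas hintpow v).div_const t)).const_mul _
    have h2 := integral_mono hIl hIr hpt
    rw [h1]
    refine h2.trans ?_
    rw [integral_const_mul]
    have e3 : ∫ ω, (t * ‖Blin (u ω) δ‖^2 + ‖Blin (u ω) v‖^2 / t) ∂μP
        = t * ‖δ‖^2 + ‖v‖^2 / t := by
      rw [integral_add ((integrable_Bw_sq hmeas hintpow δ).const_mul t)
        ((integrable_Bw_sq hmeas hintpow v).div_const t),
        integral_const_mul, integral_div,
        L2_identity hmeas hindep hmean hvar hintpow δ,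
        L2_identity hmeas hindep hmean hvar hintpow v]
    rw [e3]
  -- conclude
  by_cases hδ0 : δ = 0
  · have hle : lam = lam' := sub_eq_zero.mp hδ0
    rw [hD, hle, sub_self, norm_zero, hδ0, norm_zero, mul_zero]
  by_cases hD0 : D = 0
  · rw [hD0, norm_zero]
    exact mul_nonneg hL (norm_nonneg _)
  · have hDpos : 0 < ‖D‖ := norm_pos_iff.mpr hD0
    have hδpos : 0 < ‖δ‖ := norm_pos_iff.mpr hδ0
    have ht : (0:ℝ) < ‖D‖ / ‖δ‖ := div_pos hDpos hδpos
    have h := key D (‖D‖ / ‖δ‖) ht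
    rw [real_inner_self_eq_norm_sq] at h
    have e : Lℓ/2 * ((‖D‖/‖δ‖) * ‖δ‖^2 + ‖D‖^2 / (‖D‖/‖δ‖)) = Lℓ * (‖D‖ * ‖δ‖) := by
      field_simp
      ring
    rw [e] at h
    nlinarith [h, hDpos, hδpos]

end
end

section
/- Let ℓ : ℝ^d → ℝ be differentiable, μ-strongly convex, and L_ℓ-smooth, and use the linear parameterization ϕ(x) = x (with s restricted to positive entries). Then the energy f(λ) = E[ℓ(T_λ(u))] is μ-strongly convex on Λ with respect to the parameter norm ‖λ‖² = ‖m‖₂² + ‖s‖₂² + ‖L‖_F². -/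
open MeasureTheory ProbabilityTheory

noncomputable section

/-- norm squared on Euclidean space is the sum of squares of coordinates -/
lemma euc_normsq {ι : Type*} [Fintype ι] (z : EuclideanSpace ℝ ι) :
    ‖z‖ ^ 2 = ∑ i, (z i) ^ 2 := by
  rw [EuclideanSpace.norm_eq, Real.sq_sqrt (by positivity)]
  simp [Real.norm_eq_abs, sq_abs]

/-- `T` is linear in the parameter `λ`. -/
lemma Tmap_linear {d : ℕ} (x y : Param d) (a b : ℝ) (v : Fin d → ℝ) :
    Tmap (fun t => t) (a • x + b • y) v
      = a • Tmap (fun t => t) x v + b • Tmap (fun t => t) y v := by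
  ext i
  have hL : ∀ j, LOf (a • x + b • y) i j = a * LOf x i j + b * LOf y i j := by
    intro j; unfold LOf; split
    · simp [PiLp.add_apply, PiLp.smul_apply]
    · simp
  simp only [Tmap, WithLp.ofLp_toLp, mOf, sOf, PiLp.add_apply, PiLp.smul_apply, smul_eq_mul, hL,
    add_mul, Finset.sum_add_distrib]
  have h1 : ∀ (c : ℝ) (w : Param d), ∑ j, c * LOf w i j * v j = c * ∑ j, LOf w i j * v j := by
    intro c w; rw [Finset.mul_sum]; exact Finset.sum_congr rfl fun j _ => by ring
  rw [h1, h1]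
  ring

/-- expressing `Tmap` components as an affine function of `u` with explicit coefficients -/
lemma Tmap_coef {d : ℕ} (lam : Param d) (v : Fin d → ℝ) (i : Fin d) :
    Tmap (fun t => t) lam v i
      = mOf lam i + ∑ j, ((if j = i then sOf lam i else 0) + LOf lam i j) * v j := by
  simp only [Tmap, WithLp.ofLp_toLp, add_mul, Finset.sum_add_distrib, ite_mul, zero_mul,
    Finset.sum_ite_eq', Finset.mem_univ, if_true]
  ring

/-- the sum of squares of the strictly lower-triangular entries, reindexed -/
lemma low_sum {d : ℕ} (lam : Param d) :
    ∑ i, ∑ j, (LOf lam i j) ^ 2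
      = ∑ q : LowIdx d, (lam (Sum.inr (Sum.inr q))) ^ 2 := by
  rw [← Finset.sum_product']
  have h1 : ∑ p : Fin d × Fin d, (LOf lam p.1 p.2) ^ 2
      = ∑ p ∈ Finset.univ.filter (fun p : Fin d × Fin d => p.2 < p.1), (LOf lam p.1 p.2) ^ 2 := by
    refine (Finset.sum_filter_of_ne ?_).symm
    intro p _ hp
    by_contra h
    exact hp (by simp [LOf, h])
  rw [show (Finset.univ ×ˢ Finset.univ : Finset (Fin d × Fin d)) = Finset.univ by
    simp, h1, Finset.sum_subtype (p := fun p : Fin d × Fin d => p.2 < p.1) _ (by simp)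
      (fun p : Fin d × Fin d => (LOf lam p.1 p.2) ^ 2)]
  refine Finset.sum_congr rfl fun q _ => ?_
  have hq : (q : Fin d × Fin d).2 < (q : Fin d × Fin d).1 := q.2
  simp only [LOf, dif_pos hq]

/-- If `ℓ` is differentiable, `μ·`-strongly convex and `L_ℓ`-smooth,
then under the linear parameterization `ϕ(x) = x` (with `s` restricted to positive
entries) the energy `f(λ) = E[ℓ(T_λ(u))]` is `μ·`-strongly convex on `Λ` with respect
to the parameter norm: subtracting `(μ/2)‖·‖²` from it leaves a function convex on
`Λ = {λ | s > 0}`. -/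
theorem energy_strongly_convex_linear
    {d : ℕ} {Ω : Type*} [MeasurableSpace Ω] (μP : Measure Ω) [IsProbabilityMeasure μP]
    (u : Ω → Fin d → ℝ)
    (hmeas : ∀ i, Measurable fun ω => u ω i)
    (hindep : iIndepFun (fun i ω => u ω i) μP)
    (hident : ∀ i j, IdentDistrib (fun ω => u ω i) (fun ω => u ω j) μP μP)
    (hmean : ∀ i, ∫ ω, u ω i ∂μP = 0)
    (hvar : ∀ i, ∫ ω, (u ω i) ^ 2 ∂μP = 1)
    (hmom3 : ∀ i, ∫ ω, (u ω i) ^ 3 ∂μP = 0)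
    (kφ : ℝ) (hmom4 : ∀ i, ∫ ω, (u ω i) ^ 4 ∂μP = kφ)
    (hintpow : ∀ (i : Fin d), ∀ k ≤ 4, Integrable (fun ω => (u ω i) ^ k) μP)
    (ℓ : Euc d → ℝ) (μ Lℓ : ℝ) (hμ : 0 < μ)
    (hdiff : Differentiable ℝ ℓ)
    (hsc : ConvexOn ℝ Set.univ (fun z => ℓ z - μ / 2 * ‖z‖ ^ 2))
    (hsmooth : ∀ z z', ‖gradient ℓ z - gradient ℓ z'‖ ≤ Lℓ * ‖z - z'‖)
    (hfint : ∀ lam : Param d, Integrable (fun ω => ℓ (Tmap (fun x => x) lam (u ω))) μP) :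
    ConvexOn ℝ {lam : Param d | ∀ i, 0 < sOf lam i}
      (fun lam => (∫ ω, ℓ (Tmap (fun x => x) lam (u ω)) ∂μP) - μ / 2 * ‖lam‖ ^ 2) := by
  classical
  -- basic integrability of the coordinates and their products
  have hui : ∀ i, Integrable (fun ω => u ω i) μP := fun i => by
    simpa using hintpow i 1 (by norm_num)
  have hmulint : ∀ i j, Integrable (fun ω => u ω i * u ω j) μP := by
    intro i j
    rcases eq_or_ne i j with rfl | h
    · simpa [sq] using hintpow i 2 (by norm_num)
    · exact (hindep.indepFun h).integrable_mul (hui i) (hui j)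
  have hmulval : ∀ i j, ∫ ω, u ω i * u ω j ∂μP = if i = j then 1 else 0 := by
    intro i j
    rcases eq_or_ne i j with rfl | h
    · simpa [sq] using hvar i
    · have := (hindep.indepFun h).integral_mul_eq_mul_integral (hui i).aestronglyMeasurable (hui j).aestronglyMeasurable
      simpa [Pi.mul_apply, hmean i, hmean j, h] using this
  -- the key second-moment identity for affine combinations of coordinates
  have keyInt : ∀ (a : ℝ) (c : Fin d → ℝ),
      Integrable (fun ω => (a + ∑ j, c j * u ω j) ^ 2) μP := by
    intro a c
    have hInt1 : Integrable (fun ω => ∑ j, 2 * a * c j * u ω j) μP :=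
      integrable_finset_sum _ fun j _ => (hui j).const_mul _
    have hInt2 : Integrable (fun ω => ∑ j, ∑ k, (c j * c k) * (u ω j * u ω k)) μP :=
      integrable_finset_sum _ fun j _ =>
        integrable_finset_sum _ fun k _ => (hmulint j k).const_mul _
    have hexp : ∀ ω, (a + ∑ j, c j * u ω j) ^ 2
        = a ^ 2 + (∑ j, 2 * a * c j * u ω j)
          + ∑ j, ∑ k, (c j * c k) * (u ω j * u ω k) := by
      intro ω
      have hSS : (∑ j, c j * u ω j) * (∑ k, c k * u ω k)
          = ∑ j, ∑ k, (c j * c k) * (u ω j * u ω k) := by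
        rw [Finset.sum_mul_sum]
        exact Finset.sum_congr rfl fun j _ => Finset.sum_congr rfl fun k _ => by ring
      have h2 : (∑ j, 2 * a * c j * u ω j) = 2 * a * ∑ j, c j * u ω j := by
        rw [Finset.mul_sum]; exact Finset.sum_congr rfl fun j _ => by ring
      rw [h2, ← hSS]; ring
    exact (((integrable_const (a ^ 2)).add hInt1).add hInt2).congr
      (Filter.Eventually.of_forall fun ω => (hexp ω).symm)
  have keyVal : ∀ (a : ℝ) (c : Fin d → ℝ),
      ∫ ω, (a + ∑ j, c j * u ω j) ^ 2 ∂μP = a ^ 2 + ∑ j, (c j) ^ 2 := by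
    intro a c
    have hInt1 : Integrable (fun ω => ∑ j, 2 * a * c j * u ω j) μP :=
      integrable_finset_sum _ fun j _ => (hui j).const_mul _
    have hInt2 : Integrable (fun ω => ∑ j, ∑ k, (c j * c k) * (u ω j * u ω k)) μP :=
      integrable_finset_sum _ fun j _ =>
        integrable_finset_sum _ fun k _ => (hmulint j k).const_mul _
    have hexp : ∀ ω, (a + ∑ j, c j * u ω j) ^ 2
        = a ^ 2 + (∑ j, 2 * a * c j * u ω j)
          + ∑ j, ∑ k, (c j * c k) * (u ω j * u ω k) := by
      intro ω
      have hSS : (∑ j, c j * u ω j) * (∑ k, c k * u ω k)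
          = ∑ j, ∑ k, (c j * c k) * (u ω j * u ω k) := by
        rw [Finset.sum_mul_sum]
        exact Finset.sum_congr rfl fun j _ => Finset.sum_congr rfl fun k _ => by ring
      have h2 : (∑ j, 2 * a * c j * u ω j) = 2 * a * ∑ j, c j * u ω j := by
        rw [Finset.mul_sum]; exact Finset.sum_congr rfl fun j _ => by ring
      rw [h2, ← hSS]; ring
    have hInt12 : Integrable (fun ω => a ^ 2 + ∑ j, 2 * a * c j * u ω j) μP :=
      (integrable_const (a ^ 2)).add hInt1
    rw [integral_congr_ae (Filter.Eventually.of_forall hexp),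
      integral_add hInt12 hInt2,
      integral_add (integrable_const (a ^ 2)) hInt1,
      integral_finset_sum _ (fun j _ => (hui j).const_mul _),
      integral_finset_sum _ (fun j _ =>
        integrable_finset_sum _ fun k _ => (hmulint j k).const_mul _)]
    have h3 : ∀ j : Fin d,
        ∫ ω, ∑ k, (c j * c k) * (u ω j * u ω k) ∂μP = (c j) ^ 2 := by
      intro j
      rw [integral_finset_sum _ (fun k _ => (hmulint j k).const_mul _)]
      have : ∀ k : Fin d, ∫ ω, (c j * c k) * (u ω j * u ω k) ∂μP
          = (c j * c k) * (if j = k then 1 else 0) := by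
        intro k; rw [integral_const_mul, hmulval j k]
      simp only [this, mul_ite, mul_one, mul_zero, Finset.sum_ite_eq, Finset.mem_univ, if_true]
      ring
    simp only [h3, integral_const_mul, hmean, mul_zero, Finset.sum_const_zero]
    simp
  -- coefficients of `Tmap` as affine function of `u`
  set cf : Param d → Fin d → Fin d → ℝ :=
    fun lam i j => (if j = i then sOf lam i else 0) + LOf lam i j with hcf
  have hTpt : ∀ (lam : Param d) ω i,
      Tmap (fun t => t) lam (u ω) i = mOf lam i + ∑ j, cf lam i j * u ω j := by
    intro lam ω i; exact Tmap_coef lam (u ω) i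
  -- integrability and value of the second moment of ‖T‖
  have hTnormInt : ∀ lam : Param d,
      Integrable (fun ω => ‖Tmap (fun t => t) lam (u ω)‖ ^ 2) μP := by
    intro lam
    have : ∀ ω, ‖Tmap (fun t => t) lam (u ω)‖ ^ 2
        = ∑ i, (mOf lam i + ∑ j, cf lam i j * u ω j) ^ 2 := by
      intro ω
      rw [euc_normsq]
      exact Finset.sum_congr rfl fun i _ => by rw [hTpt lam ω i]
    exact (integrable_finset_sum _ fun i _ => keyInt (mOf lam i) (cf lam i)).congr
      (Filter.Eventually.of_forall fun ω => (this ω).symm)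
  have hcfsq : ∀ (lam : Param d) i, ∑ j, (cf lam i j) ^ 2
      = (sOf lam i) ^ 2 + ∑ j, (LOf lam i j) ^ 2 := by
    intro lam i
    have : ∀ j, (cf lam i j) ^ 2 = (if j = i then (sOf lam i) ^ 2 else 0) + (LOf lam i j) ^ 2 := by
      intro j
      rcases eq_or_ne j i with rfl | h
      · simp [hcf, LOf, lt_irrefl]
      · simp [hcf, h]
    simp only [this, Finset.sum_add_distrib, Finset.sum_ite_eq', Finset.mem_univ, if_true]
  have hTnormVal : ∀ lam : Param d,
      ∫ ω, ‖Tmap (fun t => t) lam (u ω)‖ ^ 2 ∂μP = ‖lam‖ ^ 2 := by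
    intro lam
    have hpt : ∀ ω, ‖Tmap (fun t => t) lam (u ω)‖ ^ 2
        = ∑ i, (mOf lam i + ∑ j, cf lam i j * u ω j) ^ 2 := by
      intro ω
      rw [euc_normsq]
      exact Finset.sum_congr rfl fun i _ => by rw [hTpt lam ω i]
    rw [integral_congr_ae (Filter.Eventually.of_forall hpt),
      integral_finset_sum _ (fun i _ => keyInt (mOf lam i) (cf lam i))]
    have : ∀ i : Fin d, ∫ ω, (mOf lam i + ∑ j, cf lam i j * u ω j) ^ 2 ∂μP
        = (mOf lam i) ^ 2 + (sOf lam i) ^ 2 + ∑ j, (LOf lam i j) ^ 2 := by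
      intro i; rw [keyVal (mOf lam i) (cf lam i), hcfsq lam i]; ring
    rw [Finset.sum_congr rfl fun i _ => this i]
    rw [euc_normsq lam, Fintype.sum_sum_type, Fintype.sum_sum_type]
    rw [Finset.sum_add_distrib, Finset.sum_add_distrib, ← low_sum lam]
    simp only [mOf, sOf]
    ring
  -- the centered integrand
  have hgint : ∀ lam : Param d,
      Integrable (fun ω => ℓ (Tmap (fun t => t) lam (u ω))
        - μ / 2 * ‖Tmap (fun t => t) lam (u ω)‖ ^ 2) μP := by
    intro lam
    exact (hfint lam).sub ((hTnormInt lam).const_mul _)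
  have hmain : ∀ lam : Param d,
      (∫ ω, ℓ (Tmap (fun t => t) lam (u ω)) ∂μP) - μ / 2 * ‖lam‖ ^ 2
        = ∫ ω, (ℓ (Tmap (fun t => t) lam (u ω))
            - μ / 2 * ‖Tmap (fun t => t) lam (u ω)‖ ^ 2) ∂μP := by
    intro lam
    rw [integral_sub (hfint lam) ((hTnormInt lam).const_mul _), integral_const_mul,
      hTnormVal lam]
  have hfun : (fun lam : Param d =>
      (∫ ω, ℓ (Tmap (fun x => x) lam (u ω)) ∂μP) - μ / 2 * ‖lam‖ ^ 2)
      = fun lam => ∫ ω, (ℓ (Tmap (fun t => t) lam (u ω))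
          - μ / 2 * ‖Tmap (fun t => t) lam (u ω)‖ ^ 2) ∂μP := funext hmain
  rw [hfun]
  constructor
  · -- convexity of the set
    intro x hx y hy a b ha hb hab
    intro i
    have hxy : sOf (a • x + b • y) i = a * sOf x i + b * sOf y i := by
      simp [sOf, PiLp.add_apply, PiLp.smul_apply]
    rw [Set.mem_setOf_eq] at hx hy
    rw [hxy]
    rcases ha.eq_or_lt with rfl | ha'
    · simp only [zero_add] at hab
      subst hab
      simpa using hy i
    · have h1 : 0 < a * sOf x i := mul_pos ha' (hx i)
      have h2 : 0 ≤ b * sOf y i := mul_nonneg hb (hy i).le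
      linarith
  · -- the convexity inequality
    intro x hx y hy a b ha hb hab
    simp only [smul_eq_mul]
    have hpt : ∀ ω, ℓ (Tmap (fun t => t) (a • x + b • y) (u ω))
          - μ / 2 * ‖Tmap (fun t => t) (a • x + b • y) (u ω)‖ ^ 2
        ≤ a * (ℓ (Tmap (fun t => t) x (u ω))
            - μ / 2 * ‖Tmap (fun t => t) x (u ω)‖ ^ 2)
          + b * (ℓ (Tmap (fun t => t) y (u ω))
            - μ / 2 * ‖Tmap (fun t => t) y (u ω)‖ ^ 2) := by
      intro ω
      have := hsc.2 (Set.mem_univ (Tmap (fun t => t) x (u ω)))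
        (Set.mem_univ (Tmap (fun t => t) y (u ω))) ha hb hab
      rw [Tmap_linear x y a b (u ω)]
      simpa using this
    calc ∫ ω, (ℓ (Tmap (fun t => t) (a • x + b • y) (u ω))
          - μ / 2 * ‖Tmap (fun t => t) (a • x + b • y) (u ω)‖ ^ 2) ∂μP
        ≤ ∫ ω, (a * (ℓ (Tmap (fun t => t) x (u ω))
              - μ / 2 * ‖Tmap (fun t => t) x (u ω)‖ ^ 2)
            + b * (ℓ (Tmap (fun t => t) y (u ω))
              - μ / 2 * ‖Tmap (fun t => t) y (u ω)‖ ^ 2)) ∂μP := by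
          exact integral_mono (hgint _)
            (((hgint x).const_mul a).add ((hgint y).const_mul b)) hpt
      _ = a * ∫ ω, (ℓ (Tmap (fun t => t) x (u ω))
              - μ / 2 * ‖Tmap (fun t => t) x (u ω)‖ ^ 2) ∂μP
          + b * ∫ ω, (ℓ (Tmap (fun t => t) y (u ω))
              - μ / 2 * ‖Tmap (fun t => t) y (u ω)‖ ^ 2) ∂μP := by
          rw [integral_add ((hgint x).const_mul a) ((hgint y).const_mul b),
            integral_const_mul, integral_const_mul]

end
end

section
/- Let the diagonal conditioner ϕ : ℝ → (0, ∞) be continuously differentiable, and assume the coordinates of u are independent with E[u_i] = 0 and E[u_i²] = 1. Then the infimum over pairs λ ≠ λ' in Λ of E‖T_λ(u) − T_{λ'}(u)‖² / ‖λ − λ'‖² equals 0; in particular there is no constant c > 0 such that E‖T_λ(u) − T_{λ'}(u)‖² ≥ c · ‖λ − λ'‖² for all λ, λ' ∈ Λ, so the quadratic lower bound through which strong convexity of ℓ transfers to the energy necessarily fails for any such nonlinear conditioner. -/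
open MeasureTheory ProbabilityTheory

noncomputable section

/-- If a positive continuous function had squared difference quotients bounded below by
`ε > 0`, it would be injective, hence strictly monotone, hence eventually negative —
a contradiction.  So some squared difference quotient is `< ε`. -/
lemma key_phi (ϕ : ℝ → ℝ) (hpos : ∀ x, 0 < ϕ x) (hc : Continuous ϕ)
    {ε : ℝ} (hε : 0 < ε) :
    ∃ a b : ℝ, a ≠ b ∧ (ϕ a - ϕ b) ^ 2 < ε * (a - b) ^ 2 := by
  by_contra h
  push_neg at h
  obtain ⟨k, hk0, hkε⟩ : ∃ k : ℝ, 0 < k ∧ k ^ 2 = ε :=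
    ⟨Real.sqrt ε, Real.sqrt_pos.mpr hε, Real.sq_sqrt hε.le⟩
  have hlow : ∀ a b : ℝ, k * |a - b| ≤ |ϕ a - ϕ b| := by
    intro a b
    rcases eq_or_ne a b with rfl | hab
    · simp
    · have h2 : (k * |a - b|) ^ 2 ≤ (ϕ a - ϕ b) ^ 2 := by
        have he : (k * |a - b|) ^ 2 = ε * (a - b) ^ 2 := by
          rw [mul_pow, hkε, sq_abs]
        rw [he]; exact h a b hab
      have := Real.sqrt_le_sqrt h2
      rwa [Real.sqrt_sq (by positivity), Real.sqrt_sq_eq_abs] at this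
  have hinj : Function.Injective ϕ := by
    intro a b hab
    by_contra hne
    have h1 : 0 < k * |a - b| := by
      have : a - b ≠ 0 := sub_ne_zero.mpr hne
      positivity
    have h2 := hlow a b
    rw [hab] at h2
    simp at h2
    linarith
  have hdk : 0 < ϕ 0 / k := div_pos (hpos 0) hk0
  rcases hc.strictMono_of_inj hinj with hm | ha
  · have ht0 : (-(ϕ 0 / k) - 1 : ℝ) < 0 := by linarith
    have h1 : ϕ (-(ϕ 0 / k) - 1) < ϕ 0 := hm ht0
    have h2 := hlow 0 (-(ϕ 0 / k) - 1)
    rw [abs_of_nonneg (by linarith : (0:ℝ) ≤ 0 - (-(ϕ 0 / k) - 1)),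
        abs_of_nonneg (by linarith : (0:ℝ) ≤ ϕ 0 - ϕ (-(ϕ 0 / k) - 1))] at h2
    have hkt : k * (0 - (-(ϕ 0 / k) - 1)) = ϕ 0 + k := by
      field_simp
      ring
    nlinarith [hpos (-(ϕ 0 / k) - 1)]
  · have ht0 : (0:ℝ) < ϕ 0 / k + 1 := by linarith
    have h1 : ϕ (ϕ 0 / k + 1) < ϕ 0 := ha ht0
    have h2 := hlow 0 (ϕ 0 / k + 1)
    rw [abs_of_nonpos (by linarith : (0:ℝ) - (ϕ 0 / k + 1) ≤ 0),
        abs_of_nonneg (by linarith : (0:ℝ) ≤ ϕ 0 - ϕ (ϕ 0 / k + 1))] at h2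
    have hkt : k * -(0 - (ϕ 0 / k + 1)) = ϕ 0 + k := by
      field_simp
      ring
    nlinarith [hpos (ϕ 0 / k + 1)]

lemma Tmap_single {d : ℕ} (ϕ : ℝ → ℝ) (i0 : Fin d) (c : ℝ) (u : Fin d → ℝ) (i : Fin d) :
    Tmap ϕ (EuclideanSpace.single (Sum.inr (Sum.inl i0) : ParamIdx d) c) u i
      = ϕ (if i = i0 then c else 0) * u i := by
  simp [Tmap, mOf, sOf, LOf, EuclideanSpace.single_apply]

lemma single_sub {d : ℕ} (idx : ParamIdx d) (a b : ℝ) :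
    (EuclideanSpace.single idx a : Param d) - EuclideanSpace.single idx b
      = EuclideanSpace.single idx (a - b) := by
  ext j
  simp [EuclideanSpace.single_apply]
  split <;> simp

lemma norm_sq_euc {d : ℕ} (x : Euc d) : ‖x‖ ^ 2 = ∑ i, (x i) ^ 2 := by
  rw [EuclideanSpace.norm_eq, Real.sq_sqrt (by positivity)]
  simp [sq_abs]

lemma Tmap_sub_norm_sq {d : ℕ} (hd : 0 < d) (ϕ : ℝ → ℝ) (a b : ℝ) (u : Fin d → ℝ) :
    ‖Tmap ϕ (EuclideanSpace.single (Sum.inr (Sum.inl ⟨0, hd⟩) : ParamIdx d) a) u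
      - Tmap ϕ (EuclideanSpace.single (Sum.inr (Sum.inl ⟨0, hd⟩) : ParamIdx d) b) u‖ ^ 2
      = (ϕ a - ϕ b) ^ 2 * (u ⟨0, hd⟩) ^ 2 := by
  rw [norm_sq_euc]
  have hpt : ∀ i, ((Tmap ϕ (EuclideanSpace.single (Sum.inr (Sum.inl ⟨0, hd⟩) : ParamIdx d) a) u
      - Tmap ϕ (EuclideanSpace.single (Sum.inr (Sum.inl ⟨0, hd⟩) : ParamIdx d) b) u) i) ^ 2
      = if i = (⟨0, hd⟩ : Fin d) then (ϕ a - ϕ b) ^ 2 * (u ⟨0, hd⟩) ^ 2 else 0 := by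
    intro i
    have : (Tmap ϕ (EuclideanSpace.single (Sum.inr (Sum.inl ⟨0, hd⟩) : ParamIdx d) a) u
      - Tmap ϕ (EuclideanSpace.single (Sum.inr (Sum.inl ⟨0, hd⟩) : ParamIdx d) b) u) i
      = ϕ (if i = (⟨0, hd⟩ : Fin d) then a else 0) * u i
        - ϕ (if i = (⟨0, hd⟩ : Fin d) then b else 0) * u i := by
      rw [PiLp.sub_apply, Tmap_single, Tmap_single]
    rw [this]
    split
    · subst ‹_›; ring
    · simp
  rw [Finset.sum_congr rfl fun i _ => hpt i]
  simp

/-- For a continuously differentiable diagonal conditioner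
`ϕ : ℝ → (0,∞)` and `u` with independent, centered, unit-variance coordinates, the
infimum over pairs `λ ≠ λ'` of `E‖T_λ(u) − T_{λ'}(u)‖² / ‖λ − λ'‖²` equals `0`;
in particular there is no constant `c > 0` with
`E‖T_λ(u) − T_{λ'}(u)‖² ≥ c‖λ − λ'‖²` for all `λ, λ'`, so the quadratic lower bound
through which strong convexity transfers to the energy fails. -/
theorem no_quadratic_lower_bound_nonlinear
    {d : ℕ} (hd : 0 < d)
    {Ω : Type*} [MeasurableSpace Ω] (μ : Measure Ω) [IsProbabilityMeasure μ]
    (u : Ω → Fin d → ℝ)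
    (hmeas : ∀ i, Measurable fun ω => u ω i)
    (hindep : iIndepFun (fun i ω => u ω i) μ)
    (hmean : ∀ i, ∫ ω, u ω i ∂μ = 0)
    (hvar : ∀ i, ∫ ω, (u ω i) ^ 2 ∂μ = 1)
    (hint1 : ∀ i, Integrable (fun ω => u ω i) μ)
    (hint2 : ∀ i j, Integrable (fun ω => u ω i * u ω j) μ)
    (ϕ : ℝ → ℝ) (hϕpos : ∀ x, 0 < ϕ x) (hϕC1 : ContDiff ℝ 1 ϕ) :
    sInf {r : ℝ | ∃ lam lam' : Param d, lam ≠ lam' ∧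
        r = (∫ ω, ‖Tmap ϕ lam (u ω) - Tmap ϕ lam' (u ω)‖ ^ 2 ∂μ) / ‖lam - lam'‖ ^ 2}
      = 0 ∧
    ¬ ∃ c : ℝ, 0 < c ∧ ∀ lam lam' : Param d,
        c * ‖lam - lam'‖ ^ 2 ≤ ∫ ω, ‖Tmap ϕ lam (u ω) - Tmap ϕ lam' (u ω)‖ ^ 2 ∂μ := by
  classical
  set i0 : Fin d := ⟨0, hd⟩ with hi0
  set idx : ParamIdx d := Sum.inr (Sum.inl i0) with hidx
  set S : Set ℝ := {r : ℝ | ∃ lam lam' : Param d, lam ≠ lam' ∧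
      r = (∫ ω, ‖Tmap ϕ lam (u ω) - Tmap ϕ lam' (u ω)‖ ^ 2 ∂μ) / ‖lam - lam'‖ ^ 2}
    with hS
  -- the energy for a single `s`-coordinate perturbation
  have hTint : ∀ a b : ℝ,
      (∫ ω, ‖Tmap ϕ (EuclideanSpace.single idx a) (u ω)
            - Tmap ϕ (EuclideanSpace.single idx b) (u ω)‖ ^ 2 ∂μ)
        = (ϕ a - ϕ b) ^ 2 := by
    intro a b
    have : (∫ ω, ‖Tmap ϕ (EuclideanSpace.single idx a) (u ω)
            - Tmap ϕ (EuclideanSpace.single idx b) (u ω)‖ ^ 2 ∂μ)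
        = ∫ ω, (ϕ a - ϕ b) ^ 2 * (u ω i0) ^ 2 ∂μ := by
      refine integral_congr_ae (Filter.Eventually.of_forall fun ω => ?_)
      exact Tmap_sub_norm_sq hd ϕ a b (u ω)
    rw [this, MeasureTheory.integral_const_mul, hvar i0, mul_one]
  have hnrm : ∀ a b : ℝ,
      ‖(EuclideanSpace.single idx a : Param d) - EuclideanSpace.single idx b‖ ^ 2
        = (a - b) ^ 2 := by
    intro a b
    rw [single_sub, EuclideanSpace.norm_single, Real.norm_eq_abs, sq_abs]
  have hne_single : ∀ a b : ℝ, a ≠ b →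
      (EuclideanSpace.single idx a : Param d) ≠ EuclideanSpace.single idx b := by
    intro a b hab h
    apply hab
    have := congrArg (fun v : Param d => v idx) h
    simpa [EuclideanSpace.single_apply] using this
  have hmem : ∀ a b : ℝ, a ≠ b → ((ϕ a - ϕ b) ^ 2 / (a - b) ^ 2) ∈ S := by
    intro a b hab
    refine ⟨EuclideanSpace.single idx a, EuclideanSpace.single idx b, hne_single a b hab, ?_⟩
    rw [hTint, hnrm]
  -- every element of S is nonnegative
  have hnonneg : ∀ r ∈ S, (0:ℝ) ≤ r := by
    rintro r ⟨lam, lam', _, rfl⟩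
    apply div_nonneg _ (by positivity)
    exact integral_nonneg fun ω => by positivity
  have hSne : S.Nonempty := ⟨_, hmem 0 1 (by norm_num)⟩
  have hbdd : BddBelow S := ⟨0, hnonneg⟩
  -- small elements of S
  have hsmall : ∀ ε : ℝ, 0 < ε → ∃ r ∈ S, r < ε := by
    intro ε hε
    obtain ⟨a, b, hab, hlt⟩ := key_phi ϕ hϕpos hϕC1.continuous hε
    refine ⟨(ϕ a - ϕ b) ^ 2 / (a - b) ^ 2, hmem a b hab, ?_⟩
    have hab2 : (0:ℝ) < (a - b) ^ 2 := by
      have : a - b ≠ 0 := sub_ne_zero.mpr hab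
      positivity
    rw [div_lt_iff₀ hab2]
    linarith [hlt]
  constructor
  · refine le_antisymm ?_ (le_csInf hSne hnonneg)
    by_contra hcon
    push_neg at hcon
    obtain ⟨r, hrS, hr⟩ := hsmall (sInf S) hcon
    exact absurd (csInf_le hbdd hrS) (not_le.mpr hr)
  · rintro ⟨c, hc, hbound⟩
    obtain ⟨a, b, hab, hlt⟩ := key_phi ϕ hϕpos hϕC1.continuous hc
    have := hbound (EuclideanSpace.single idx a) (EuclideanSpace.single idx b)
    rw [hTint, hnrm] at this
    linarith

end
end
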